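/- Let M be a b-matching of an instance (G,b,r) and let P be a path of type (2) with respect to M, with endpoints a_1 and a'_1 and corresponding first houses h_1 and h'_1. Let P' be P together with an edge e ∈ M incident with a_1 of rank greater than r(a_1,h_1) if a_1 is saturated, and together with an edge e' ∈ M incident with a'_1 of rank greater than r(a'_1,h'_1) if a'_1 is saturated. Then M ⊕ P' is a b-matching that is more popular than M; in particular M is not popular. -/

import Mathlib

open Finset

section Core

variable {A H : Type*} [DecidableEq A] [DecidableEq H]

/-- The degree of an agent `a` in an edge set `M`. -/
def adeg (M : Finset (A × H)) (a : A) : ℕ := (M.filter fun e => e.1 = a).card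

/-- The degree of a house `h` in an edge set `M`. -/
def hdeg (M : Finset (A × H)) (h : H) : ℕ := (M.filter fun e => e.2 = h).card

/-- `M` is a b-matching of the instance with edge set `E` and capacities `bA` on agents
and `bH` on houses. -/
def IsBM (E : Finset (A × H)) (bA : A → ℕ) (bH : H → ℕ) (M : Finset (A × H)) : Prop :=
  M ⊆ E ∧ (∀ a : A, adeg M a ≤ bA a) ∧ (∀ h : H, hdeg M h ≤ bH h)

/-- The `i`-th entry of the signature of agent `a` in `M`: the number of rank-`i` edges
of `M` incident with `a`. -/
def cnt (rk : A × H → ℕ) (M : Finset (A × H)) (a : A) (i : ℕ) : ℕ :=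
  (M.filter fun e => e.1 = a ∧ rk e = i).card

/-- Agent `a` prefers `M'` to `M`: the signature of `a` in `M'` is lexicographically
greater than its signature in `M`. -/
def Prefers (rk : A × H → ℕ) (M' M : Finset (A × H)) (a : A) : Prop :=
  ∃ j : ℕ, (∀ i < j, cnt rk M' a i = cnt rk M a i) ∧ cnt rk M a j < cnt rk M' a j

/-- `M'` is more popular than `M`: strictly more agents prefer `M'` to `M` than
prefer `M` to `M'`. -/
def MorePop [Fintype A] (rk : A × H → ℕ) (M' M : Finset (A × H)) : Prop :=
  Nat.card {a : A // Prefers rk M M' a} < Nat.card {a : A // Prefers rk M' M a}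

/-- `M` is a popular b-matching. -/
def Popular [Fintype A] (E : Finset (A × H)) (bA : A → ℕ) (bH : H → ℕ) (rk : A × H → ℕ)
    (M : Finset (A × H)) : Prop :=
  IsBM E bA bH M ∧ ∀ M' : Finset (A × H), IsBM E bA bH M' → ¬ MorePop rk M' M

/-- An even path with respect to `M`, with vertex sequence
`a 0, h 0, a 1, h 1, …, a k, h k`: it is alternating, its first edge `(a 0, h 0)` is not
in `M`, no edge is repeated, and for each `i`, the `M`-edge `(h i, a (i+1))` has the same
rank as the following non-`M`-edge `(a (i+1), h (i+1))`.  It is the even path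
`P_e(a 0, h k)`; extended by a further `M`-edge `(h k, a')` it yields `P_e(a 0, a')`. -/
structure EvenPath (E M : Finset (A × H)) (rk : A × H → ℕ) (k : ℕ) where
  a : Fin (k + 1) → A
  h : Fin (k + 1) → H
  fwd_mem : ∀ i : Fin (k + 1), (a i, h i) ∈ E
  fwd_not : ∀ i : Fin (k + 1), (a i, h i) ∉ M
  bwd_mem : ∀ i : Fin k, (a i.succ, h i.castSucc) ∈ M
  rank_eq : ∀ i : Fin k, rk (a i.succ, h i.castSucc) = rk (a i.succ, h i.succ)
  fwd_inj : ∀ i j : Fin (k + 1), (a i, h i) = (a j, h j) → i = j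
  bwd_inj : ∀ i j : Fin k, (a i.succ, h i.castSucc) = (a j.succ, h j.castSucc) → i = j

namespace EvenPath

variable {E M : Finset (A × H)} {rk : A × H → ℕ} {k : ℕ}

/-- The non-`M`-edges of an even path. -/
def fwdEdges (P : EvenPath E M rk k) : Finset (A × H) :=
  Finset.univ.image fun i : Fin (k + 1) => (P.a i, P.h i)

/-- The `M`-edges of an even path. -/
def bwdEdges (P : EvenPath E M rk k) : Finset (A × H) :=
  Finset.univ.image fun i : Fin k => (P.a i.succ, P.h i.castSucc)

/-- All edges of an even path. -/
def edges (P : EvenPath E M rk k) : Finset (A × H) := P.fwdEdges ∪ P.bwdEdges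

end EvenPath

/-- The condition on the starting agent `a0` (with first house `h0`) of paths of
types (1), (2) and (3): `a0` is unsaturated, or `M` contains an edge incident with `a0`
of rank (strictly) worse than that of `(a0, h0)`. -/
def StartCond (bA : A → ℕ) (rk : A × H → ℕ) (M : Finset (A × H)) (a0 : A) (h0 : H) : Prop :=
  adeg M a0 ≠ bA a0 ∨ ∃ e ∈ M, e.1 = a0 ∧ rk (a0, h0) < rk e

/-- A path of type (1) with respect to `M`: `(P_e(a_1, h_{k-1}), a_k, h_k, a_{k+1})`. -/
structure Type1 (E M : Finset (A × H)) (bA : A → ℕ) (rk : A × H → ℕ) where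
  k : ℕ
  P : EvenPath E M rk k
  ak : A
  hk : H
  ak1 : A
  mem2 : (ak, hk) ∈ E
  e1 : (ak, P.h (Fin.last k)) ∈ M
  e2 : (ak, hk) ∉ M
  e3 : (ak1, hk) ∈ M
  start : StartCond bA rk M (P.a 0) (P.h 0)
  rdrop : rk (ak, hk) < rk (ak, P.h (Fin.last k))
  dcase : (P.a 0 ≠ ak ∧ P.a 0 ≠ ak1 ∧ ak ≠ ak1) ∨
      (P.a 0 ≠ ak ∧ P.a 0 = ak1 ∧ rk (P.a 0, P.h 0) < rk (P.a 0, hk))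
  ne1 : (ak, P.h (Fin.last k)) ∉ P.bwdEdges
  ne2 : (ak, hk) ∉ P.fwdEdges
  ne3 : (ak1, hk) ∉ P.bwdEdges ∧ (ak1, hk) ≠ (ak, P.h (Fin.last k))

/-- The edge set of a path of type (1). -/
def Type1.edges {E M : Finset (A × H)} {bA : A → ℕ} {rk : A × H → ℕ}
    (T : Type1 E M bA rk) : Finset (A × H) :=
  T.P.edges ∪ {(T.ak, T.P.h (Fin.last T.k)), (T.ak, T.hk), (T.ak1, T.hk)}

/-- A path of type (2) with respect to `M`: `(P_e(a_1, a), P_e^r(a, a'_1))`, two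
edge-disjoint even paths both ending at the same agent `am`. -/
structure Type2 (E M : Finset (A × H)) (bA : A → ℕ) (rk : A × H → ℕ) where
  k : ℕ
  k' : ℕ
  P : EvenPath E M rk k
  P' : EvenPath E M rk k'
  am : A
  cl : (am, P.h (Fin.last k)) ∈ M
  cl' : (am, P'.h (Fin.last k')) ∈ M
  clne : (am, P.h (Fin.last k)) ∉ P.bwdEdges
  clne' : (am, P'.h (Fin.last k')) ∉ P'.bwdEdges
  start : StartCond bA rk M (P.a 0) (P.h 0)
  start' : StartCond bA rk M (P'.a 0) (P'.h 0)
  dist : P.a 0 ≠ am ∧ P'.a 0 ≠ am ∧ P.a 0 ≠ P'.a 0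
  disj : Disjoint (P.edges ∪ {(am, P.h (Fin.last k))}) (P'.edges ∪ {(am, P'.h (Fin.last k'))})

/-- The edge set of a path of type (2). -/
def Type2.edges {E M : Finset (A × H)} {bA : A → ℕ} {rk : A × H → ℕ}
    (T : Type2 E M bA rk) : Finset (A × H) :=
  (T.P.edges ∪ {(T.am, T.P.h (Fin.last T.k))}) ∪
    (T.P'.edges ∪ {(T.am, T.P'.h (Fin.last T.k'))})

/-- A path of type (3) with respect to `M`: an even path `P_e(a_1, h)` ending at an
unsaturated house `h`. -/
structure Type3 (E M : Finset (A × H)) (bA : A → ℕ) (bH : H → ℕ) (rk : A × H → ℕ) where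
  k : ℕ
  P : EvenPath E M rk k
  start : StartCond bA rk M (P.a 0) (P.h 0)
  unsat : hdeg M (P.h (Fin.last k)) ≠ bH (P.h (Fin.last k))

/-- A path of type (4) with respect to `M`: a closed alternating path
`(P_e(a_1, h_k), a_1)` with `rk (h_k, a_1) > rk (a_1, h_1)`. -/
structure Type4 (E M : Finset (A × H)) (rk : A × H → ℕ) where
  k : ℕ
  P : EvenPath E M rk k
  cl : (P.a 0, P.h (Fin.last k)) ∈ M
  clne : (P.a 0, P.h (Fin.last k)) ∉ P.bwdEdges
  rgt : rk (P.a 0, P.h 0) < rk (P.a 0, P.h (Fin.last k))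

/-- The edge set of a path of type (4). -/
def Type4.edges {E M : Finset (A × H)} {rk : A × H → ℕ} (T : Type4 E M rk) :
    Finset (A × H) :=
  T.P.edges ∪ {(T.P.a 0, T.P.h (Fin.last T.k))}

end Core


section Aux2

variable {A H : Type*} [DecidableEq A] [DecidableEq H]
variable {E M : Finset (A × H)} {rk : A × H → ℕ} {k : ℕ}

lemma fwd_filter_card (P : EvenPath E M rk k) (p : A × H → Prop) [DecidablePred p] :
    (P.fwdEdges.filter p).card = ∑ i : Fin (k + 1), if p (P.a i, P.h i) then 1 else 0 := by
  rw [EvenPath.fwdEdges, Finset.filter_image,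
    Finset.card_image_of_injective _ (fun i j hij => P.fwd_inj i j hij),
    Finset.card_filter]

lemma bwd_filter_card (P : EvenPath E M rk k) (p : A × H → Prop) [DecidablePred p] :
    (P.bwdEdges.filter p).card =
      ∑ i : Fin k, if p (P.a i.succ, P.h i.castSucc) then 1 else 0 := by
  rw [EvenPath.bwdEdges, Finset.filter_image,
    Finset.card_image_of_injective _ (fun i j hij => P.bwd_inj i j hij),
    Finset.card_filter]

lemma union_filter_card {s t : Finset (A × H)} (hd : Disjoint s t) (p : A × H → Prop)
    [DecidablePred p] :
    ((s ∪ t).filter p).card = (s.filter p).card + (t.filter p).card := by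
  rw [Finset.filter_union,
    Finset.card_union_of_disjoint (hd.mono (Finset.filter_subset _ _) (Finset.filter_subset _ _))]

lemma master_card {M R F : Finset (A × H)} (hR : R ⊆ M) (hF : Disjoint F M)
    (p : A × H → Prop) [DecidablePred p] :
    (((M \ R) ∪ F).filter p).card + (R.filter p).card
      = (M.filter p).card + (F.filter p).card := by
  have hd : Disjoint (M \ R) F := (hF.symm).mono_left (Finset.sdiff_subset)
  rw [union_filter_card hd]
  have hsd : (M \ R).filter p = M.filter p \ R.filter p := by
    ext x
    simp only [Finset.mem_filter, Finset.mem_sdiff]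
    tauto
  rw [hsd, Finset.card_sdiff_of_subset (Finset.filter_subset_filter p hR)]
  have := Finset.card_le_card (Finset.filter_subset_filter p hR)
  omega

end Aux2

/-- If `P` is a path of type (2) with respect to a b-matching `M`, and
`P'` is `P` together with an `M`-edge `e` incident with the endpoint `a_1` of rank worse
than `r (a_1, h_1)` if `a_1` is saturated, and together with an `M`-edge `e'` incident
with the other endpoint `a'_1` of rank worse than `r (a'_1, h'_1)` if `a'_1` is
saturated, then `M ⊕ P'` is a b-matching that is more popular than `M`; in particular
`M` is not popular. -/
theorem type2_not_popular
    {A H : Type*} [Fintype A] [Fintype H] [DecidableEq A] [DecidableEq H]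
    (E : Finset (A × H)) (bA : A → ℕ) (bH : H → ℕ) (rk : A × H → ℕ)
    (hrk : ∀ e ∈ E, 0 < rk e)
    (M : Finset (A × H)) (hM : IsBM E bA bH M)
    (T : Type2 E M bA rk) (X X' : Finset (A × H))
    (hX : (adeg M (T.P.a 0) ≠ bA (T.P.a 0) ∧ X = ∅) ∨
      (adeg M (T.P.a 0) = bA (T.P.a 0) ∧
        ∃ e ∈ M, e.1 = T.P.a 0 ∧ rk (T.P.a 0, T.P.h 0) < rk e ∧ e ∉ T.edges ∧ X = {e}))
    (hX' : (adeg M (T.P'.a 0) ≠ bA (T.P'.a 0) ∧ X' = ∅) ∨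
      (adeg M (T.P'.a 0) = bA (T.P'.a 0) ∧
        ∃ e' ∈ M, e'.1 = T.P'.a 0 ∧ rk (T.P'.a 0, T.P'.h 0) < rk e' ∧ e' ∉ T.edges ∧
          X' = {e'})) :
    IsBM E bA bH (symmDiff M (T.edges ∪ X ∪ X')) ∧
      MorePop rk (symmDiff M (T.edges ∪ X ∪ X')) M ∧ ¬ Popular E bA bH rk M := by
  classical
  obtain ⟨hME, hMA, hMH⟩ := hM
  -- uniform facts about X and X'
  have hXfacts : X ⊆ M ∧ (∀ f ∈ X, f.1 = T.P.a 0 ∧ rk (T.P.a 0, T.P.h 0) < rk f ∧ f ∉ T.edges)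
      ∧ adeg M (T.P.a 0) + 1 ≤ bA (T.P.a 0) + X.card := by
    rcases hX with ⟨hun, rfl⟩ | ⟨hsat, e, heM, he1, herk, heT, rfl⟩
    · have := hMA (T.P.a 0)
      exact ⟨Finset.empty_subset _, by simp, by simp; omega⟩
    · refine ⟨by simpa using heM, ?_, by simp [hsat]⟩
      intro f hf
      simp only [Finset.mem_singleton] at hf
      subst hf
      exact ⟨he1, herk, heT⟩
  obtain ⟨hXM, hXel, hXb⟩ := hXfacts
  have hX'facts : X' ⊆ M ∧ (∀ f ∈ X', f.1 = T.P'.a 0 ∧ rk (T.P'.a 0, T.P'.h 0) < rk f ∧ f ∉ T.edges)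
      ∧ adeg M (T.P'.a 0) + 1 ≤ bA (T.P'.a 0) + X'.card := by
    rcases hX' with ⟨hun, rfl⟩ | ⟨hsat, e, heM, he1, herk, heT, rfl⟩
    · have := hMA (T.P'.a 0)
      exact ⟨Finset.empty_subset _, by simp, by simp; omega⟩
    · refine ⟨by simpa using heM, ?_, by simp [hsat]⟩
      intro f hf
      simp only [Finset.mem_singleton] at hf
      subst hf
      exact ⟨he1, herk, heT⟩
  obtain ⟨hX'M, hX'el, hX'b⟩ := hX'facts
  set F : Finset (A × H) := T.P.fwdEdges ∪ T.P'.fwdEdges with hFdef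
  set R : Finset (A × H) := (T.P.bwdEdges ∪ {(T.am, T.P.h (Fin.last T.k))}) ∪
      ((T.P'.bwdEdges ∪ {(T.am, T.P'.h (Fin.last T.k'))}) ∪ (X ∪ X')) with hRdef
  have hRM : R ⊆ M := by
    intro e he
    rw [hRdef] at he
    simp only [Finset.mem_union, Finset.mem_singleton, EvenPath.bwdEdges, Finset.mem_image,
      Finset.mem_univ, true_and] at he
    rcases he with (⟨i, rfl⟩ | rfl) | ((⟨i, rfl⟩ | rfl) | (h | h))
    · exact T.P.bwd_mem i
    · exact T.cl
    · exact T.P'.bwd_mem i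
    · exact T.cl'
    · exact hXM h
    · exact hX'M h
  have hFdisjM : Disjoint F M := by
    rw [Finset.disjoint_left]
    intro e he hm
    rw [hFdef] at he
    simp only [Finset.mem_union, EvenPath.fwdEdges, Finset.mem_image, Finset.mem_univ,
      true_and] at he
    rcases he with ⟨i, rfl⟩ | ⟨i, rfl⟩
    · exact T.P.fwd_not i hm
    · exact T.P'.fwd_not i hm
  have hN : symmDiff M (T.edges ∪ X ∪ X') = (M \ R) ∪ F := by
    have hTE : T.edges ∪ X ∪ X' = F ∪ R := by
      rw [hFdef, hRdef]
      unfold Type2.edges EvenPath.edges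
      ac_rfl
    rw [hTE, symmDiff_def, Finset.sup_eq_union, Finset.union_sdiff_distrib,
      Finset.sdiff_eq_empty_iff_subset.mpr hRM, Finset.union_empty,
      sdiff_eq_left.mpr hFdisjM,
      Finset.union_comm F R]
    have : M \ (R ∪ F) = (M \ R) \ F := by
      rw [sdiff_sdiff, Finset.sup_eq_union]
    rw [this, sdiff_eq_left.mpr (hFdisjM.symm.mono_left Finset.sdiff_subset)]
  have key : ∀ (p : A × H → Prop) [DecidablePred p],
      ((symmDiff M (T.edges ∪ X ∪ X')).filter p).card + (R.filter p).card
        = (M.filter p).card + (F.filter p).card := by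
    intro p _
    rw [hN]
    exact master_card hRM hFdisjM p
  -- disjointness facts for decomposing F and R
  have hsub1 : T.P.fwdEdges ⊆ T.P.edges ∪ {(T.am, T.P.h (Fin.last T.k))} :=
    (Finset.subset_union_left (s₂ := T.P.bwdEdges)).trans
      Finset.subset_union_left
  have hsub1' : T.P'.fwdEdges ⊆ T.P'.edges ∪ {(T.am, T.P'.h (Fin.last T.k'))} :=
    (Finset.subset_union_left (s₂ := T.P'.bwdEdges)).trans
      Finset.subset_union_left
  have hsubB : T.P.bwdEdges ∪ {(T.am, T.P.h (Fin.last T.k))}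
      ⊆ T.P.edges ∪ {(T.am, T.P.h (Fin.last T.k))} :=
    Finset.union_subset_union Finset.subset_union_right (Finset.Subset.refl _)
  have hsubB' : T.P'.bwdEdges ∪ {(T.am, T.P'.h (Fin.last T.k'))}
      ⊆ T.P'.edges ∪ {(T.am, T.P'.h (Fin.last T.k'))} :=
    Finset.union_subset_union Finset.subset_union_right (Finset.Subset.refl _)
  have hsubT : T.P.edges ∪ {(T.am, T.P.h (Fin.last T.k))} ⊆ T.edges :=
    Finset.subset_union_left
  have hsubT' : T.P'.edges ∪ {(T.am, T.P'.h (Fin.last T.k'))} ⊆ T.edges :=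
    Finset.subset_union_right
  have dfwd : Disjoint T.P.fwdEdges T.P'.fwdEdges := T.disj.mono hsub1 hsub1'
  have d1 : Disjoint T.P.bwdEdges {(T.am, T.P.h (Fin.last T.k))} :=
    Finset.disjoint_singleton_right.mpr T.clne
  have d1' : Disjoint T.P'.bwdEdges {(T.am, T.P'.h (Fin.last T.k'))} :=
    Finset.disjoint_singleton_right.mpr T.clne'
  have dXT : Disjoint (X ∪ X') T.edges := by
    rw [Finset.disjoint_left]
    intro f hf hfT
    rcases Finset.mem_union.mp hf with h | h
    · exact (hXel f h).2.2 hfT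
    · exact (hX'el f h).2.2 hfT
  have d4 : Disjoint X X' := by
    rw [Finset.disjoint_left]
    intro f hf hf'
    exact T.dist.2.2 (((hXel f hf).1.symm.trans (hX'el f hf').1))
  have d3 : Disjoint (T.P'.bwdEdges ∪ {(T.am, T.P'.h (Fin.last T.k'))}) (X ∪ X') :=
    (dXT.mono_right (hsubB'.trans hsubT')).symm
  have d2 : Disjoint (T.P.bwdEdges ∪ {(T.am, T.P.h (Fin.last T.k))})
      ((T.P'.bwdEdges ∪ {(T.am, T.P'.h (Fin.last T.k'))}) ∪ (X ∪ X')) := by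
    refine Finset.disjoint_union_right.mpr ⟨T.disj.mono hsubB hsubB', ?_⟩
    exact (dXT.mono_right (hsubB.trans hsubT)).symm
  have hFcard : ∀ (p : A × H → Prop) [DecidablePred p], (F.filter p).card =
      (∑ i : Fin (T.k + 1), if p (T.P.a i, T.P.h i) then 1 else 0) +
      (∑ i : Fin (T.k' + 1), if p (T.P'.a i, T.P'.h i) then 1 else 0) := by
    intro p _
    rw [hFdef, union_filter_card dfwd, fwd_filter_card, fwd_filter_card]
  have hRcard : ∀ (p : A × H → Prop) [DecidablePred p], (R.filter p).card =
      ((∑ i : Fin T.k, if p (T.P.a i.succ, T.P.h i.castSucc) then 1 else 0) +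
        (if p (T.am, T.P.h (Fin.last T.k)) then 1 else 0)) +
      (((∑ i : Fin T.k', if p (T.P'.a i.succ, T.P'.h i.castSucc) then 1 else 0) +
        (if p (T.am, T.P'.h (Fin.last T.k')) then 1 else 0)) +
      ((X.filter p).card + (X'.filter p).card)) := by
    intro p _
    rw [hRdef, union_filter_card d2, union_filter_card d1, union_filter_card d3,
      union_filter_card d1', union_filter_card d4, bwd_filter_card, bwd_filter_card,
      Finset.card_filter _ ({(T.am, T.P.h (Fin.last T.k))} : Finset (A × H)),
      Finset.card_filter _ ({(T.am, T.P'.h (Fin.last T.k'))} : Finset (A × H)),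
      Finset.sum_singleton, Finset.sum_singleton]
  -- degree equation for agents
  have adegEq : ∀ a : A, adeg (symmDiff M (T.edges ∪ X ∪ X')) a
      + ((X.filter fun e => e.1 = a).card + (X'.filter fun e => e.1 = a).card)
      + 2 * (if T.am = a then 1 else 0)
      = adeg M a + ((if T.P.a 0 = a then 1 else 0) + (if T.P'.a 0 = a then 1 else 0)) := by
    intro a
    have h := key (fun e => e.1 = a)
    rw [hFcard, hRcard] at h
    simp only [Fin.sum_univ_succ] at h
    simp only [adeg]
    omega
  -- degree inequality for houses
  have hdegLe : ∀ h : H, hdeg (symmDiff M (T.edges ∪ X ∪ X')) h ≤ hdeg M h := by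
    intro x
    have h := key (fun e => e.2 = x)
    rw [hFcard, hRcard] at h
    simp only [Fin.sum_univ_castSucc] at h
    simp only [hdeg]
    omega
  -- signature equation
  have cntEq : ∀ (a : A) (j : ℕ), cnt rk (symmDiff M (T.edges ∪ X ∪ X')) a j
      + ((X.filter fun e => e.1 = a ∧ rk e = j).card
        + (X'.filter fun e => e.1 = a ∧ rk e = j).card)
      + ((if T.am = a ∧ rk (T.am, T.P.h (Fin.last T.k)) = j then 1 else 0)
        + (if T.am = a ∧ rk (T.am, T.P'.h (Fin.last T.k')) = j then 1 else 0))
      = cnt rk M a j + ((if T.P.a 0 = a ∧ rk (T.P.a 0, T.P.h 0) = j then 1 else 0)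
        + (if T.P'.a 0 = a ∧ rk (T.P'.a 0, T.P'.h 0) = j then 1 else 0)) := by
    intro a j
    have h := key (fun e => e.1 = a ∧ rk e = j)
    rw [hFcard, hRcard] at h
    simp only [Fin.sum_univ_succ, T.P.rank_eq, T.P'.rank_eq] at h
    simp only [cnt]
    omega
  -- b-matching
  have hBM : IsBM E bA bH (symmDiff M (T.edges ∪ X ∪ X')) := by
    refine ⟨?_, ?_, ?_⟩
    · rw [hN]
      refine Finset.union_subset (Finset.sdiff_subset.trans hME) ?_
      rw [hFdef]
      refine Finset.union_subset ?_ ?_ <;>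
      · intro e he
        simp only [EvenPath.fwdEdges, Finset.mem_image, Finset.mem_univ, true_and] at he
        obtain ⟨i, rfl⟩ := he
        first
        | exact T.P.fwd_mem i
        | exact T.P'.fwd_mem i
    · intro a
      have h := adegEq a
      by_cases h0 : T.P.a 0 = a
      · have ham : ¬ T.am = a := fun hc => T.dist.1 (h0.trans hc.symm)
        have h0' : ¬ T.P'.a 0 = a := fun hc => T.dist.2.2 (h0.trans hc.symm)
        rw [if_pos h0, if_neg h0', if_neg ham] at h
        have hXf : (X.filter fun e => e.1 = a).card = X.card := by
          congr 1
          exact Finset.filter_true_of_mem fun f hf => (hXel f hf).1.trans h0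
        rw [hXf] at h
        rw [← h0] at h ⊢
        omega
      · by_cases h0' : T.P'.a 0 = a
        · have ham : ¬ T.am = a := fun hc => T.dist.2.1 (h0'.trans hc.symm)
          rw [if_pos h0', if_neg h0, if_neg ham] at h
          have hXf : (X'.filter fun e => e.1 = a).card = X'.card := by
            congr 1
            exact Finset.filter_true_of_mem fun f hf => (hX'el f hf).1.trans h0'
          rw [hXf] at h
          rw [← h0'] at h ⊢
          omega
        · rw [if_neg h0, if_neg h0'] at h
          have := hMA a
          omega
    · intro x
      exact (hdegLe x).trans (hMH x)
  have hXzero : ∀ (i : ℕ), i ≤ rk (T.P.a 0, T.P.h 0) →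
      (X.filter fun e => e.1 = T.P.a 0 ∧ rk e = i).card = 0 := by
    intro i hi
    rw [Finset.card_eq_zero, Finset.filter_eq_empty_iff]
    intro f hf hc
    have := (hXel f hf).2.1
    omega
  have hX'zero : ∀ (i : ℕ), i ≤ rk (T.P'.a 0, T.P'.h 0) →
      (X'.filter fun e => e.1 = T.P'.a 0 ∧ rk e = i).card = 0 := by
    intro i hi
    rw [Finset.card_eq_zero, Finset.filter_eq_empty_iff]
    intro f hf hc
    have := (hX'el f hf).2.1
    omega
  have hXother : ∀ (a : A) (j : ℕ), a ≠ T.P.a 0 →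
      (X.filter fun e => e.1 = a ∧ rk e = j).card = 0 := by
    intro a j ha
    rw [Finset.card_eq_zero, Finset.filter_eq_empty_iff]
    intro f hf hc
    exact ha (hc.1 ▸ ((hXel f hf).1 ▸ rfl))
  have hXother' : ∀ (a : A) (j : ℕ), a ≠ T.P'.a 0 →
      (X'.filter fun e => e.1 = a ∧ rk e = j).card = 0 := by
    intro a j ha
    rw [Finset.card_eq_zero, Finset.filter_eq_empty_iff]
    intro f hf hc
    exact ha (hc.1 ▸ ((hX'el f hf).1 ▸ rfl))
  -- generic negations for the if-conditions in cntEq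
  have ham1 : ∀ (a : A) (j : ℕ), a ≠ T.am → ¬(T.am = a ∧ rk (T.am, T.P.h (Fin.last T.k)) = j) :=
    fun a j ha hc => ha hc.1.symm
  have ham2 : ∀ (a : A) (j : ℕ), a ≠ T.am →
      ¬(T.am = a ∧ rk (T.am, T.P'.h (Fin.last T.k')) = j) :=
    fun a j ha hc => ha hc.1.symm
  have hh1 : ∀ (a : A) (j : ℕ), a ≠ T.P.a 0 → ¬(T.P.a 0 = a ∧ rk (T.P.a 0, T.P.h 0) = j) :=
    fun a j ha hc => ha hc.1.symm
  have hh2 : ∀ (a : A) (j : ℕ), a ≠ T.P'.a 0 → ¬(T.P'.a 0 = a ∧ rk (T.P'.a 0, T.P'.h 0) = j) :=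
    fun a j ha hc => ha hc.1.symm
  have hne0m : T.P.a 0 ≠ T.am := T.dist.1
  have hne0m' : T.P'.a 0 ≠ T.am := T.dist.2.1
  have hne00' : T.P.a 0 ≠ T.P'.a 0 := T.dist.2.2
  -- a0 prefers N to M
  have pref0 : Prefers rk (symmDiff M (T.edges ∪ X ∪ X')) M (T.P.a 0) := by
    refine ⟨rk (T.P.a 0, T.P.h 0), ?_, ?_⟩
    · intro i hi
      have h := cntEq (T.P.a 0) i
      have hx1 : ¬(T.P.a 0 = T.P.a 0 ∧ rk (T.P.a 0, T.P.h 0) = i) := fun hc => by omega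
      rw [hXzero i (le_of_lt hi), hXother' (T.P.a 0) i hne00',
        if_neg (ham1 _ i hne0m ∘ id), if_neg (ham2 _ i hne0m),
        if_neg hx1, if_neg (hh2 _ i hne00')] at h
      omega
    · have h := cntEq (T.P.a 0) (rk (T.P.a 0, T.P.h 0))
      rw [hXzero _ le_rfl, hXother' (T.P.a 0) _ hne00',
        if_neg (ham1 _ _ hne0m), if_neg (ham2 _ _ hne0m),
        if_pos ⟨rfl, rfl⟩, if_neg (hh2 _ _ hne00')] at h
      omega
  have pref0' : Prefers rk (symmDiff M (T.edges ∪ X ∪ X')) M (T.P'.a 0) := by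
    refine ⟨rk (T.P'.a 0, T.P'.h 0), ?_, ?_⟩
    · intro i hi
      have h := cntEq (T.P'.a 0) i
      have hx1 : ¬(T.P'.a 0 = T.P'.a 0 ∧ rk (T.P'.a 0, T.P'.h 0) = i) := fun hc => by omega
      rw [hX'zero i (le_of_lt hi), hXother (T.P'.a 0) i hne00'.symm,
        if_neg (ham1 _ i hne0m'), if_neg (ham2 _ i hne0m'),
        if_neg (hh1 _ i hne00'.symm), if_neg hx1] at h
      omega
    · have h := cntEq (T.P'.a 0) (rk (T.P'.a 0, T.P'.h 0))
      rw [hX'zero _ le_rfl, hXother (T.P'.a 0) _ hne00'.symm,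
        if_neg (ham1 _ _ hne0m'), if_neg (ham2 _ _ hne0m'),
        if_neg (hh1 _ _ hne00'.symm), if_pos ⟨rfl, rfl⟩] at h
      omega
  -- only am can prefer M to N
  have honly : ∀ a : A, Prefers rk M (symmDiff M (T.edges ∪ X ∪ X')) a → a = T.am := by
    intro a hp
    by_contra hne
    obtain ⟨j, hj1, hj2⟩ := hp
    by_cases h0 : T.P.a 0 = a
    · subst h0
      have h := cntEq (T.P.a 0) j
      rw [hXother' (T.P.a 0) j hne00',
        if_neg (ham1 _ j hne0m), if_neg (ham2 _ j hne0m),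
        if_neg (hh2 _ j hne00')] at h
      have hXc : 1 ≤ (X.filter fun e => e.1 = T.P.a 0 ∧ rk e = j).card := by
        by_contra hc
        have hzero : (X.filter fun e => e.1 = T.P.a 0 ∧ rk e = j).card = 0 := by omega
        rw [hzero] at h
        split_ifs at h <;> omega
      obtain ⟨f, hf⟩ := Finset.card_pos.mp
        (by omega : 0 < (X.filter fun e => e.1 = T.P.a 0 ∧ rk e = j).card)
      rw [Finset.mem_filter] at hf
      have hfrk := (hXel f hf.1).2.1
      have hr0j : rk (T.P.a 0, T.P.h 0) < j := by
        have := hf.2.2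
        omega
      have heq := hj1 _ hr0j
      have h2 := cntEq (T.P.a 0) (rk (T.P.a 0, T.P.h 0))
      rw [hXzero _ le_rfl, hXother' (T.P.a 0) _ hne00',
        if_neg (ham1 _ _ hne0m), if_neg (ham2 _ _ hne0m),
        if_pos ⟨rfl, rfl⟩, if_neg (hh2 _ _ hne00')] at h2
      omega
    · by_cases h0' : T.P'.a 0 = a
      · subst h0'
        have h := cntEq (T.P'.a 0) j
        rw [hXother (T.P'.a 0) j hne00'.symm,
          if_neg (ham1 _ j hne0m'), if_neg (ham2 _ j hne0m'),
          if_neg (hh1 _ j hne00'.symm)] at h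
        have hXc : 1 ≤ (X'.filter fun e => e.1 = T.P'.a 0 ∧ rk e = j).card := by
          by_contra hc
          have hzero : (X'.filter fun e => e.1 = T.P'.a 0 ∧ rk e = j).card = 0 := by omega
          rw [hzero] at h
          split_ifs at h <;> omega
        obtain ⟨f, hf⟩ := Finset.card_pos.mp
          (by omega : 0 < (X'.filter fun e => e.1 = T.P'.a 0 ∧ rk e = j).card)
        rw [Finset.mem_filter] at hf
        have hfrk := (hX'el f hf.1).2.1
        have hr0j : rk (T.P'.a 0, T.P'.h 0) < j := by
          have := hf.2.2
          omega
        have heq := hj1 _ hr0j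
        have h2 := cntEq (T.P'.a 0) (rk (T.P'.a 0, T.P'.h 0))
        rw [hX'zero _ le_rfl, hXother (T.P'.a 0) _ hne00'.symm,
          if_neg (ham1 _ _ hne0m'), if_neg (ham2 _ _ hne0m'),
          if_neg (hh1 _ _ hne00'.symm), if_pos ⟨rfl, rfl⟩] at h2
        omega
      · have h := cntEq a j
        rw [hXother a j (fun hc => h0 hc.symm), hXother' a j (fun hc => h0' hc.symm),
          if_neg (ham1 a j (fun hc => hne hc)), if_neg (ham2 a j (fun hc => hne hc)),
          if_neg (hh1 a j (fun hc => h0 hc.symm)), if_neg (hh2 a j (fun hc => h0' hc.symm))] at h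
        omega
  have hMP : MorePop rk (symmDiff M (T.edges ∪ X ∪ X')) M := by
    rw [MorePop]
    have hs : Subsingleton {a : A // Prefers rk M (symmDiff M (T.edges ∪ X ∪ X')) a} :=
      ⟨fun x y => Subtype.ext ((honly x.1 x.2).trans (honly y.1 y.2).symm)⟩
    have h1 : Nat.card {a : A // Prefers rk M (symmDiff M (T.edges ∪ X ∪ X')) a} ≤ 1 :=
      Finite.card_le_one_iff_subsingleton.mpr hs
    have hnt : Nontrivial {a : A // Prefers rk (symmDiff M (T.edges ∪ X ∪ X')) M a} :=
      ⟨⟨⟨T.P.a 0, pref0⟩, ⟨T.P'.a 0, pref0'⟩, fun hc => T.dist.2.2 (congrArg Subtype.val hc)⟩⟩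
    have h2 : 1 < Nat.card {a : A // Prefers rk (symmDiff M (T.edges ∪ X ∪ X')) M a} :=
      Finite.one_lt_card_iff_nontrivial.mpr hnt
    omega
  refine ⟨hBM, hMP, ?_⟩
  intro hpop
  exact hpop.2 _ hBM hMP
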